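/- Let H be a Hilbert space, ξ ∈ H a vector, X a nonempty set, and f: X → H a map. The following are equivalent: (1) for every η ∈ H there exists x ∈ X such that ‖f(x) − ξ‖ ≤ ‖f(x) − η‖; (2) ξ belongs to the closure (in the norm topology) of the convex hull of {f(x) : x ∈ X}. -/
import Mathlib

open scoped InnerProductSpace

set_option maxHeartbeats 1000000 in
/-- Let `H` be a (complex) Hilbert space, `ξ ∈ H`, `X` a nonempty set and
`f : X → H`. Then (1) for every `η ∈ H` there is `x ∈ X` with `‖f x - ξ‖ ≤ ‖f x - η‖`
iff (2) `ξ` lies in the norm closure of the convex hull of the range of `f`. -/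
theorem stmt_3 {H : Type*} [NormedAddCommGroup H] [InnerProductSpace ℂ H] [CompleteSpace H]
    {X : Type*} [Nonempty X] (ξ : H) (f : X → H) :
    (∀ η : H, ∃ x : X, ‖f x - ξ‖ ≤ ‖f x - η‖) ↔
      ξ ∈ closure (convexHull ℝ (Set.range f)) := by
  letI : InnerProductSpace ℝ H := InnerProductSpace.complexToReal
  constructor
  · intro h1
    by_contra hξ
    set K := closure (convexHull ℝ (Set.range f)) with hK
    have hKne : K.Nonempty :=
      ⟨f (Classical.arbitrary X),
        subset_closure (subset_convexHull ℝ _ (Set.mem_range_self _))⟩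
    have hKc : Convex ℝ K := (convex_convexHull ℝ _).closure
    have hKcomp : IsComplete K := isClosed_closure.isComplete
    obtain ⟨p, hpK, hp⟩ := exists_norm_eq_iInf_of_complete_convex hKne hKcomp hKc ξ
    have hproj := (norm_eq_iInf_iff_real_inner_le_zero hKc hpK).1 hp
    obtain ⟨x, hx⟩ := h1 p
    have hfx : f x ∈ K :=
      subset_closure (subset_convexHull ℝ _ (Set.mem_range_self x))
    have h2 : ⟪ξ - p, f x - p⟫_ℝ ≤ 0 := hproj (f x) hfx
    have hne : ξ ≠ p := by rintro rfl; exact hξ hpK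
    have hpos : 0 < ‖ξ - p‖ := by
      rw [norm_pos_iff]; exact sub_ne_zero.mpr hne
    have e : ‖f x - ξ‖ ^ 2 =
        ‖f x - p‖ ^ 2 - 2 * ⟪f x - p, ξ - p⟫_ℝ + ‖ξ - p‖ ^ 2 := by
      have := norm_sub_sq_real (F := H) (f x - p) (ξ - p)
      rwa [sub_sub_sub_cancel_right] at this
    have hcomm : ⟪f x - p, ξ - p⟫_ℝ = ⟪ξ - p, f x - p⟫_ℝ := real_inner_comm _ _
    have hxx : ‖f x - ξ‖ ^ 2 ≤ ‖f x - p‖ ^ 2 := by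
      have := norm_nonneg (f x - ξ)
      nlinarith
    nlinarith [hxx, e, hcomm, h2, hpos]
  · intro h2 η
    by_cases hηξ : η = ξ
    · exact ⟨Classical.arbitrary X, by simp [hηξ]⟩
    by_contra hc
    push_neg at hc
    set L : H →L[ℝ] ℝ := innerSL ℝ (η - ξ) with hL
    set c : ℝ := (‖η‖ ^ 2 - ‖ξ‖ ^ 2) / 2 with hc'
    have hsub : Set.range f ⊆ {z | c ≤ L z} := by
      rintro _ ⟨x, rfl⟩
      have hlt : ‖f x - η‖ < ‖f x - ξ‖ := hc x
      have h1 : ‖f x - η‖ ^ 2 < ‖f x - ξ‖ ^ 2 := by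
        have := norm_nonneg (f x - η)
        nlinarith
      have e1 := norm_sub_sq_real (F := H) (f x) η
      have e2 := norm_sub_sq_real (F := H) (f x) ξ
      have e3 : (L (f x) : ℝ) = ⟪f x, η⟫_ℝ - ⟪f x, ξ⟫_ℝ := by
        simp [hL, inner_sub_left, real_inner_comm]
      simp only [Set.mem_setOf_eq]
      rw [e3, hc']
      linarith
    have hconv : Convex ℝ {z | c ≤ L z} :=
      convex_halfSpace_ge (L.toLinearMap.isLinear) c
    have hcl : IsClosed {z | c ≤ L z} :=
      isClosed_Ici.preimage L.continuous
    have hξS : c ≤ L ξ :=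
      closure_minimal (convexHull_min hsub hconv) hcl h2
    have e4 : (L ξ : ℝ) = ⟪ξ, η⟫_ℝ - ‖ξ‖ ^ 2 := by
      simp [hL, inner_sub_left, real_inner_comm, real_inner_self_eq_norm_sq]
    have e5 := norm_sub_sq_real (F := H) η ξ
    have hpos : 0 < ‖η - ξ‖ ^ 2 := by
      have h0 : η - ξ ≠ 0 := sub_ne_zero.mpr hηξ
      exact pow_pos (norm_pos_iff.mpr h0) 2
    rw [e4, hc'] at hξS
    have hcomm2 : ⟪η, ξ⟫_ℝ = ⟪ξ, η⟫_ℝ := real_inner_comm _ _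
    nlinarith
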